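/- The Wilcoxon signed-rank statistic admits the Walsh-average representation: for real numbers y_1,...,y_n with distinct absolute values and no zeros, \sum_{i=1}^n R_i 1(y_i > 0) = \sum_{1 \le j \le k \le n} 1(y_j + y_k > 0), where R_i is the rank of |y_i| among |y_1|,...,|y_n|. -/

import Mathlib

open Finset

/-- Walsh-average representation of the Wilcoxon signed-rank statistic: for nonzero
reals `y_1,...,y_n` with pairwise distinct absolute values and `y_j + y_k ≠ 0` for
all `j, k`, we have `∑_i R_i · 1(y_i > 0) = #{(j,k) : j ≤ k, y_j + y_k > 0}`,
where `R_i = #{l : |y_l| ≤ |y_i|}`. -/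
theorem walsh_average_representation
    (n : ℕ) (y : Fin n → ℝ)
    (hnz : ∀ i, y i ≠ 0)
    (habs : ∀ i j, i ≠ j → |y i| ≠ |y j|)
    (hsum : ∀ j k, y j + y k ≠ 0) :
    ∑ i : Fin n,
        (Finset.univ.filter (fun l : Fin n => |y l| ≤ |y i|)).card *
          (if 0 < y i then 1 else 0)
      = ∑ j : Fin n, ∑ k ∈ Finset.Ici j, (if 0 < y j + y k then 1 else 0) := by
  classical
  -- key positivity facts
  have key1 : ∀ i l : Fin n, |y l| ≤ |y i| → 0 < y i → 0 < y i + y l := by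
    intro i l hle hpos
    have h1 : -|y l| ≤ y l := neg_abs_le _
    have h2 : |y i| = y i := abs_of_pos hpos
    have h0 : (0 : ℝ) ≤ y i + y l := by linarith
    exact lt_of_le_of_ne h0 (Ne.symm (hsum i l))
  have key2 : ∀ j k : Fin n, 0 < y j + y k → |y k| ≤ |y j| → 0 < y j := by
    intro j k hpos hle
    by_contra h
    push_neg at h
    have hneg : y j < 0 := lt_of_le_of_ne h (hnz j)
    have h1 : |y j| = -y j := abs_of_neg hneg
    have h2 : y k ≤ |y k| := le_abs_self _
    linarith
  -- rewrite LHS as a card of a filtered product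
  have hL : (∑ i : Fin n,
        (Finset.univ.filter (fun l : Fin n => |y l| ≤ |y i|)).card *
          (if 0 < y i then 1 else 0))
      = ((univ ×ˢ univ : Finset (Fin n × Fin n)).filter
          (fun p => |y p.2| ≤ |y p.1| ∧ 0 < y p.1)).card := by
    rw [Finset.card_filter, Finset.sum_product]
    refine Finset.sum_congr rfl fun i _ => ?_
    by_cases h : 0 < y i
    · rw [if_pos h, mul_one, Finset.card_filter]
      exact Finset.sum_congr rfl fun l _ => by simp [h]
    · rw [if_neg h, mul_zero]
      exact (Finset.sum_eq_zero fun l _ => by simp [h]).symm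
  have hR : (∑ j : Fin n, ∑ k ∈ Finset.Ici j, (if 0 < y j + y k then 1 else 0))
      = ((univ ×ˢ univ : Finset (Fin n × Fin n)).filter
          (fun p => p.1 ≤ p.2 ∧ 0 < y p.1 + y p.2)).card := by
    rw [Finset.card_filter, Finset.sum_product]
    refine Finset.sum_congr rfl fun j _ => ?_
    have hIci : (Finset.Ici j : Finset (Fin n)) = univ.filter (fun k => j ≤ k) := by
      ext k; simp
    rw [hIci, Finset.sum_filter]
    simp [ite_and]
  rw [hL, hR]
  refine Finset.card_nbij' (fun p => (p.1 ⊓ p.2, p.1 ⊔ p.2))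
    (fun p => if |y p.2| ≤ |y p.1| then (p.1, p.2) else (p.2, p.1)) ?_ ?_ ?_ ?_
  · rintro ⟨a, b⟩ hab
    simp only [Finset.mem_coe, Finset.mem_filter, Finset.mem_product, Finset.mem_univ, true_and] at hab
    simp only [Finset.mem_coe, Finset.mem_filter, Finset.mem_product, Finset.mem_univ, true_and]
    refine ⟨inf_le_sup, ?_⟩
    have hpos : 0 < y a + y b := key1 a b hab.1 hab.2
    rcases le_total a b with h | h
    · rw [inf_eq_left.mpr h, sup_eq_right.mpr h]; exact hpos
    · rw [inf_eq_right.mpr h, sup_eq_left.mpr h]; linarith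
  · rintro ⟨j, k⟩ hjk
    simp only [Finset.mem_coe, Finset.mem_filter, Finset.mem_product, Finset.mem_univ, true_and] at hjk
    dsimp only
    by_cases h : |y k| ≤ |y j|
    · rw [if_pos h]
      simp only [Finset.mem_coe, Finset.mem_filter, Finset.mem_product, Finset.mem_univ, true_and]
      exact ⟨h, key2 j k hjk.2 h⟩
    · rw [if_neg h]
      simp only [Finset.mem_coe, Finset.mem_filter, Finset.mem_product, Finset.mem_univ, true_and]
      have h' : |y j| ≤ |y k| := le_of_not_ge h
      have hpos : 0 < y k + y j := by linarith [hjk.2]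
      exact ⟨h', key2 k j hpos h'⟩
  · rintro ⟨a, b⟩ hab
    simp only [Finset.mem_coe, Finset.mem_filter, Finset.mem_product, Finset.mem_univ, true_and] at hab
    dsimp only
    by_cases hab' : a = b
    · subst hab'; simp
    · have hlt : |y b| < |y a| := lt_of_le_of_ne hab.1 (habs b a (Ne.symm hab'))
      rcases le_total a b with h | h
      · rw [inf_eq_left.mpr h, sup_eq_right.mpr h, if_pos (le_of_lt hlt)]
      · rw [inf_eq_right.mpr h, sup_eq_left.mpr h, if_neg (not_le.mpr hlt)]
  · rintro ⟨j, k⟩ hjk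
    simp only [Finset.mem_coe, Finset.mem_filter, Finset.mem_product, Finset.mem_univ, true_and] at hjk
    dsimp only
    by_cases h : |y k| ≤ |y j|
    · rw [if_pos h]
      dsimp only
      rw [inf_eq_left.mpr hjk.1, sup_eq_right.mpr hjk.1]
    · rw [if_neg h]
      dsimp only
      rw [inf_eq_right.mpr hjk.1, sup_eq_left.mpr hjk.1]
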